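/- Let Ω ⊂ ℝ² be the open triangle with vertices A(−1/2, 1/2), B(1/2, 1/2), C(1/2, 3/2), and define z(x,y) = 1 − 2y/(1 + √(1+4xy)). Then: (i) 1 + 4xy > 0 for every (x,y) ∈ Ω, so z is well defined and C¹ on Ω; (ii) for every (x,y) ∈ Ω, z(x,y) + x·∂z/∂x(x,y) − y·∂z/∂y(x,y) = 1; (iii) z(x, x+1) = 0 for every x ∈ (−1/2, 1/2). -/

import Mathlib

open MeasureTheory Set Real

/-- The open triangle with vertices A(−1/2,1/2), B(1/2,1/2), C(1/2,3/2):
its sides lie on the lines y = 1/2, x = 1/2 and y = x + 1. -/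
def TriangleEx3 : Set (ℝ × ℝ) :=
  {p : ℝ × ℝ | 1/2 < p.2 ∧ p.1 < 1/2 ∧ p.2 < p.1 + 1}

/-- The explicit solution z(x,y) = 1 − 2y/(1 + √(1+4xy)) of Example 3. -/
noncomputable def zEx3 : ℝ × ℝ → ℝ := fun p =>
  1 - 2 * p.2 / (1 + Real.sqrt (1 + 4 * p.1 * p.2))

/-- Partial derivative ∂z/∂x. -/
noncomputable def zEx3x (p : ℝ × ℝ) : ℝ := deriv (fun t => zEx3 (t, p.2)) p.1

/-- Partial derivative ∂z/∂y. -/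
noncomputable def zEx3y (p : ℝ × ℝ) : ℝ := deriv (fun t => zEx3 (p.1, t)) p.2

lemma pos_of_mem {p : ℝ × ℝ} (hp : p ∈ TriangleEx3) : 0 < 1 + 4 * p.1 * p.2 := by
  obtain ⟨h1, h2, h3⟩ := hp
  nlinarith [sq_nonneg (2*p.1+1), sq_nonneg (2*p.1-1)]

lemma hderivx (x y : ℝ) (h0 : 0 < 1 + 4 * x * y) :
    HasDerivAt (fun t => zEx3 (t, y))
      (-((0*(1+Real.sqrt (1+4*x*y)) - 2*y*((4*y)/(2*Real.sqrt (1+4*x*y))))/(1+Real.sqrt (1+4*x*y))^2)) x := by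
  have hs : 0 < Real.sqrt (1+4*x*y) := Real.sqrt_pos.2 h0
  have hinner : HasDerivAt (fun t : ℝ => 1 + 4 * t * y) (4*y) x := by
    simpa using ((hasDerivAt_id x).const_mul 4 |>.mul_const y).const_add 1
  have hsq := hinner.sqrt (ne_of_gt h0)
  have hden : HasDerivAt (fun t : ℝ => 1 + Real.sqrt (1 + 4 * t * y)) ((4*y)/(2*Real.sqrt (1+4*x*y))) x := by
    simpa using hsq.const_add 1
  have hne : 1 + Real.sqrt (1+4*x*y) ≠ 0 := by positivity
  have hdiv := (hasDerivAt_const x (2*y)).div hden hne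
  simpa [zEx3] using hdiv.const_sub 1

lemma hderivy (x y : ℝ) (h0 : 0 < 1 + 4 * x * y) :
    HasDerivAt (fun t => zEx3 (x, t))
      (-((2*(1+Real.sqrt (1+4*x*y)) - 2*y*((4*x)/(2*Real.sqrt (1+4*x*y))))/(1+Real.sqrt (1+4*x*y))^2)) y := by
  have hs : 0 < Real.sqrt (1+4*x*y) := Real.sqrt_pos.2 h0
  have hinner : HasDerivAt (fun t : ℝ => 1 + 4 * x * t) (4*x) y := by
    simpa using ((hasDerivAt_id y).const_mul (4*x)).const_add 1
  have hsq := hinner.sqrt (ne_of_gt h0)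
  have hden : HasDerivAt (fun t : ℝ => 1 + Real.sqrt (1 + 4 * x * t)) ((4*x)/(2*Real.sqrt (1+4*x*y))) y := by
    simpa using hsq.const_add 1
  have hne : 1 + Real.sqrt (1+4*x*y) ≠ 0 := by positivity
  have hnum : HasDerivAt (fun t : ℝ => 2 * t) 2 y := by
    simpa using (hasDerivAt_id y).const_mul 2
  have hdiv := hnum.div hden hne
  have : HasDerivAt (fun t => zEx3 (x, t))
      ((2*(1+Real.sqrt (1+4*x*y)) - 2*y*((4*x)/(2*Real.sqrt (1+4*x*y))))/(1+Real.sqrt (1+4*x*y))^2 * (-1) + 0) y := by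
    simpa [zEx3] using hdiv.const_sub 1
  simpa using this

theorem stmt_2 :
    (∀ p ∈ TriangleEx3, 0 < 1 + 4 * p.1 * p.2) ∧
    ContDiffOn ℝ 1 zEx3 TriangleEx3 ∧
    (∀ p ∈ TriangleEx3, zEx3 p + p.1 * zEx3x p - p.2 * zEx3y p = 1) ∧
    (∀ x ∈ Ioo (-(1:ℝ)/2) (1/2), zEx3 (x, x + 1) = 0) := by
  refine ⟨fun p hp => pos_of_mem hp, ?_, ?_, ?_⟩
  · intro p hp
    apply ContDiffAt.contDiffWithinAt
    have h0 := pos_of_mem hp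
    have hs : 0 < Real.sqrt (1+4*p.1*p.2) := Real.sqrt_pos.2 h0
    have hinner : ContDiffAt ℝ 1 (fun q : ℝ × ℝ => 1 + 4 * q.1 * q.2) p := by fun_prop
    have hsq : ContDiffAt ℝ 1 (fun q : ℝ × ℝ => Real.sqrt (1 + 4 * q.1 * q.2)) p :=
      (Real.contDiffAt_sqrt (ne_of_gt h0)).comp p hinner
    have hden : ContDiffAt ℝ 1 (fun q : ℝ × ℝ => 1 + Real.sqrt (1 + 4 * q.1 * q.2)) p :=
      contDiffAt_const.add hsq
    have hnum : ContDiffAt ℝ 1 (fun q : ℝ × ℝ => 2 * q.2) p := by fun_prop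
    have hne : 1 + Real.sqrt (1+4*p.1*p.2) ≠ 0 := by positivity
    exact contDiffAt_const.sub (hnum.div hden hne)
  · rintro ⟨x, y⟩ hp
    have h0 := pos_of_mem hp
    have hs : 0 < Real.sqrt (1+4*x*y) := Real.sqrt_pos.2 h0
    have hs2 : Real.sqrt (1+4*x*y)^2 = 1+4*x*y := Real.sq_sqrt (le_of_lt h0)
    have hx := (hderivx x y h0).deriv
    have hy := (hderivy x y h0).deriv
    simp only [zEx3x, zEx3y] at *
    rw [hx, hy]
    have hne : 1 + Real.sqrt (1+4*x*y) ≠ 0 := by positivity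
    simp only [zEx3]
    generalize Real.sqrt (1+4*x*y) = s at *
    field_simp
    nlinarith [hs2, sq_nonneg (Real.sqrt (1+4*x*y)), hs]
  · intro x hx
    obtain ⟨h1, h2⟩ := hx
    have key : (1:ℝ) + 4 * x * (x+1) = (2*x+1)^2 := by ring
    have : Real.sqrt (1 + 4 * x * (x+1)) = 2*x+1 := by
      rw [key, Real.sqrt_sq (by linarith)]
    simp only [zEx3, this]
    have : (1:ℝ) + (2*x+1) = 2*(x+1) := by ring
    rw [this]
    have hx1 : x + 1 ≠ 0 := by linarith
    field_simp
    norm_num
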